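/- Let W : [0,1]ⁿ → ℝ be a function that is non-decreasing and 1-Lipschitz in each coordinate separately. Let (X₁,…,Xₙ) and (X′₁,…,X′ₙ) be vectors of independent [0,1]-valued random variables with d_K(X_i, X′_i) ≤ ε for every i (Kolmogorov distance). Then |E[W(X₁,…,Xₙ)] − E[W(X′₁,…,X′ₙ)]| ≤ nε. -/

import Mathlib

open MeasureTheory

section Aux

private noncomputable def cl01 (x : ℝ) : ℝ := max 0 (min x 1)

private lemma cl01_mono : Monotone cl01 := fun _ _ hab =>
  max_le_max le_rfl (min_le_min hab le_rfl)

private lemma cl01_key {a b : ℝ} (h : a ≤ b) : cl01 b - cl01 a ≤ b - a := by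
  simp only [cl01, min_def, max_def]; split_ifs <;> linarith

private lemma cl01_lip (a b : ℝ) : |cl01 a - cl01 b| ≤ |a - b| := by
  rcases le_total a b with h | h
  · rw [abs_sub_comm (cl01 a), abs_sub_comm a, abs_of_nonneg (sub_nonneg.2 (cl01_mono h)),
      abs_of_nonneg (sub_nonneg.2 h)]
    exact cl01_key h
  · rw [abs_of_nonneg (sub_nonneg.2 (cl01_mono h)), abs_of_nonneg (sub_nonneg.2 h)]
    exact cl01_key h

private lemma cl01_mem (x : ℝ) : cl01 x ∈ Set.Icc (0:ℝ) 1 :=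
  ⟨le_max_left _ _, max_le (by norm_num) (min_le_right _ _)⟩

private lemma cl01_of_mem {x : ℝ} (hx : x ∈ Set.Icc (0:ℝ) 1) : cl01 x = x := by
  simp only [cl01]; rw [min_eq_left hx.2, max_eq_right hx.1]

private lemma cl01_cont : Continuous cl01 := by
  unfold cl01; fun_prop

private lemma abs_telescope (f : ℕ → ℝ) (d : ℕ → ℝ) :
    ∀ n, (∀ k, k < n → |f k - f (k+1)| ≤ d k) → |f 0 - f n| ≤ ∑ k ∈ Finset.range n, d k := by
  intro n
  induction n with
  | zero => simp
  | succ n ih =>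
    intro h
    calc |f 0 - f (n+1)| ≤ |f 0 - f n| + |f n - f (n+1)| := abs_sub_le _ _ _
      _ ≤ (∑ k ∈ Finset.range n, d k) + d n :=
        add_le_add (ih fun k hk => h k (hk.trans (Nat.lt_succ_self n))) (h n (Nat.lt_succ_self n))
      _ = ∑ k ∈ Finset.range (n+1), d k := (Finset.sum_range_succ d n).symm

private lemma W_tele {n : ℕ} (W : (Fin n → ℝ) → ℝ)
    (hWlip : ∀ (i : Fin n) (y : Fin n → ℝ) (a b : ℝ),
      |W (Function.update y i a) - W (Function.update y i b)| ≤ |a - b|)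
    (u v : Fin n → ℝ) : |W u - W v| ≤ ∑ i, |u i - v i| := by
  set seq : ℕ → (Fin n → ℝ) := fun k i => if (i : ℕ) < k then v i else u i with hseq
  set d : ℕ → ℝ := fun k => if h : k < n then |u ⟨k, h⟩ - v ⟨k, h⟩| else 0 with hd
  have h0 : seq 0 = u := funext fun i => by simp [hseq]
  have hn : seq n = v := funext fun i => by simp [hseq, i.isLt]
  have key : ∀ k, k < n → |W (seq k) - W (seq (k+1))| ≤ d k := by
    intro k hk
    set i : Fin n := ⟨k, hk⟩ with hi
    have e1 : Function.update (seq k) i (u i) = seq k := by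
      have h : u i = seq k i := by simp [hseq, hi]
      rw [h, Function.update_eq_self]
    have e2 : Function.update (seq k) i (v i) = seq (k+1) := by
      funext j
      rcases eq_or_ne j i with rfl | hj
      · simp [hseq, hi]
      · have hjk : (j : ℕ) ≠ k := fun hc => hj (Fin.ext hc)
        rw [Function.update_of_ne hj]
        simp only [hseq]
        by_cases h2 : (j : ℕ) < k
        · rw [if_pos h2, if_pos (by omega)]
        · rw [if_neg h2, if_neg (by omega)]
    rw [← e1, ← e2]
    show _ ≤ if h : k < n then |u ⟨k, h⟩ - v ⟨k, h⟩| else 0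
    rw [dif_pos hk]
    exact hWlip i _ (u i) (v i)
  have := abs_telescope (fun k => W (seq k)) d n key
  simp only [h0, hn] at this
  refine this.trans (le_of_eq ?_)
  rw [← Fin.sum_univ_eq_sum_range d n]
  refine Finset.sum_congr rfl fun i _ => ?_
  show (if h : (i:ℕ) < n then |u ⟨i, h⟩ - v ⟨i, h⟩| else 0) = |u i - v i|
  rw [dif_pos i.isLt]

/-- One-dimensional comparison lemma. -/
private lemma oneD (ν ν' : Measure ℝ) [IsProbabilityMeasure ν] [IsProbabilityMeasure ν']
    (hν : ν (Set.Icc 0 1) = 1) (hν' : ν' (Set.Icc 0 1) = 1) (ε : ℝ)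
    (hK : ∀ z : ℝ, |(ν (Set.Ici z)).toReal - (ν' (Set.Ici z)).toReal| ≤ ε)
    (g : ℝ → ℝ) (hgmono : Monotone g) (hglip : ∀ a b, |g a - g b| ≤ |a - b|) :
    |(∫ x, g x ∂ν) - ∫ x, g x ∂ν'| ≤ ε := by
  have hε : 0 ≤ ε := le_trans (abs_nonneg _) (hK 0)
  have hgcont : Continuous g := by
    have : LipschitzWith 1 g := LipschitzWith.of_dist_le_mul (fun a b => by
      rw [Real.dist_eq, Real.dist_eq]; simpa using hglip a b)
    exact this.continuous
  set h : ℝ → ℝ := fun x => g (cl01 x) - g 0 with hh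
  have hhmono : Monotone h := fun a b hab => by
    simp only [hh]; exact sub_le_sub_right (hgmono (cl01_mono hab)) _
  have hhcont : Continuous h := by
    simp only [hh]; exact (hgcont.comp cl01_cont).sub continuous_const
  have hh0 : ∀ x, 0 ≤ h x := fun x => by
    simp only [hh, sub_nonneg]; exact hgmono (cl01_mem x).1
  have hh1 : ∀ x, h x ≤ 1 := fun x => by
    have h1 : g (cl01 x) - g 0 ≤ g 1 - g 0 := sub_le_sub_right (hgmono (cl01_mem x).2) _
    have h2 : g 1 - g 0 ≤ 1 := le_trans (le_abs_self _) (by simpa using hglip 1 0)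
    exact h1.trans h2
  have key : ∀ (ρ : Measure ℝ) [IsProbabilityMeasure ρ], ρ (Set.Icc 0 1) = 1 →
      (∫ x, g x ∂ρ) = (∫ t in Set.Ioc (0:ℝ) 1, (ρ {a | t ≤ h a}).toReal) + g 0 := by
    intro ρ hρprob hρ
    have hae : ∀ᵐ x ∂ρ, x ∈ Set.Icc (0:ℝ) 1 := by
      have hc : ρ (Set.Icc (0:ℝ) 1)ᶜ = 0 := by
        have hcc := measure_compl (μ := ρ) (s := Set.Icc (0:ℝ) 1) measurableSet_Icc
          (measure_ne_top ρ _)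
        rw [hcc, hρ, measure_univ, tsub_self]
      have hset : {x : ℝ | ¬ x ∈ Set.Icc (0:ℝ) 1} = (Set.Icc (0:ℝ) 1)ᶜ := rfl
      rw [ae_iff, hset]
      exact hc
    have hint : Integrable h ρ :=
      Integrable.mono' (integrable_const 1) (hhcont.measurable.aestronglyMeasurable)
        (Filter.Eventually.of_forall fun x => by
          rw [Real.norm_eq_abs, abs_of_nonneg (hh0 x)]; exact hh1 x)
    have hcong : (∫ x, g x ∂ρ) = ∫ x, (h x + g 0) ∂ρ := by
      refine integral_congr_ae ?_
      filter_upwards [hae] with x hx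
      simp [hh, cl01_of_mem hx]
    rw [hcong, integral_add hint (integrable_const _), integral_const, probReal_univ]
    simp only [ENNReal.toReal_one, one_smul, smul_eq_mul, one_mul]
    congr 1
    exact hint.integral_eq_integral_Ioc_meas_le (Filter.Eventually.of_forall hh0)
      (Filter.Eventually.of_forall hh1)
  rw [key ν hν, key ν' hν']
  set F : ℝ → ℝ := fun t => (ν {a | t ≤ h a}).toReal with hF
  set G : ℝ → ℝ := fun t => (ν' {a | t ≤ h a}).toReal with hG
  have hpt : ∀ t : ℝ, 0 < t → |F t - G t| ≤ ε := by
    intro t ht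
    rcases Set.eq_empty_or_nonempty {a : ℝ | t ≤ h a} with hS | hS
    · simp [hF, hG, hS, hε]
    · have hSsub : {a : ℝ | t ≤ h a} ⊆ Set.Ioi 0 := by
        intro a ha
        by_contra hle
        simp only [Set.mem_Ioi, not_lt] at hle
        have ha0 : h a = 0 := by
          have hc : cl01 a = 0 := by
            simp only [cl01]
            rw [min_eq_left (hle.trans (by norm_num)), max_eq_left hle]
          simp [hh, hc]
        simp only [Set.mem_setOf_eq, ha0] at ha
        exact absurd ha (not_le.2 ht)
      have hbdd : BddBelow {a : ℝ | t ≤ h a} := ⟨0, fun a ha => le_of_lt (hSsub ha)⟩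
      have hclosed : IsClosed {a : ℝ | t ≤ h a} := by
        have hpre : {a : ℝ | t ≤ h a} = h ⁻¹' Set.Ici t := rfl
        rw [hpre]; exact isClosed_Ici.preimage hhcont
      set z := sInf {a : ℝ | t ≤ h a} with hz
      have hzmem : z ∈ {a : ℝ | t ≤ h a} := hclosed.csInf_mem hS hbdd
      have hSeq : {a : ℝ | t ≤ h a} = Set.Ici z := by
        ext a
        constructor
        · intro ha; exact csInf_le hbdd ha
        · intro ha; exact le_trans hzmem (hhmono ha)
      simp only [hF, hG, hSeq]
      exact hK z
  have hBnd : ∀ (ρ : Measure ℝ) [IsProbabilityMeasure ρ],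
      Integrable (fun t => (ρ {a | t ≤ h a}).toReal)
        (volume.restrict (Set.Ioc (0:ℝ) 1)) := by
    intro ρ hρprob
    have hanti : Antitone (fun t => (ρ {a | t ≤ h a}).toReal) := by
      intro s t hst
      apply ENNReal.toReal_mono (measure_ne_top ρ _)
      exact measure_mono (fun a ha => le_trans hst ha)
    haveI : IsFiniteMeasure (volume.restrict (Set.Ioc (0:ℝ) 1)) :=
      ⟨by simp [Real.volume_Ioc]⟩
    refine Integrable.mono' (integrable_const 1) hanti.measurable.aestronglyMeasurable
      (Filter.Eventually.of_forall fun t => ?_)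
    rw [Real.norm_eq_abs, abs_of_nonneg ENNReal.toReal_nonneg]
    exact ENNReal.toReal_le_of_le_ofReal zero_le_one (by simpa using prob_le_one)
  have hFi := hBnd ν
  have hGi := hBnd ν'
  haveI : IsFiniteMeasure (volume.restrict (Set.Ioc (0:ℝ) 1)) := ⟨by simp [Real.volume_Ioc]⟩
  have hsub : ((∫ t in Set.Ioc (0:ℝ) 1, F t) + g 0) - ((∫ t in Set.Ioc (0:ℝ) 1, G t) + g 0)
      = ∫ t in Set.Ioc (0:ℝ) 1, (F t - G t) := by
    rw [integral_sub hFi hGi]; ring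
  rw [hsub]
  calc |∫ t in Set.Ioc (0:ℝ) 1, (F t - G t)|
      ≤ ε * ((volume.restrict (Set.Ioc (0:ℝ) 1)) Set.univ).toReal := by
        rw [← Real.norm_eq_abs]
        apply norm_integral_le_of_norm_le_const
        filter_upwards [ae_restrict_mem measurableSet_Ioc] with t ht
        rw [Real.norm_eq_abs]
        exact hpt t ht.1
    _ = ε := by simp [Real.volume_Ioc]

private lemma insertNth_eq_update {m : ℕ} (i : Fin (m+1)) (x : ℝ) (y : Fin m → ℝ) :
    i.insertNth x y = Function.update (i.insertNth 0 y : Fin (m+1) → ℝ) i x := by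
  funext j
  rcases eq_or_ne j i with rfl | hj
  · simp
  · obtain ⟨l, rfl⟩ := Fin.exists_succAbove_eq hj
    rw [Function.update_of_ne (Fin.succAbove_ne i l)]
    simp

private lemma step {m : ℕ} (Wc : (Fin (m+1) → ℝ) → ℝ) (C : ℝ)
    (hWb : ∀ x, |Wc x| ≤ C) (hWm : Measurable Wc)
    (hmono : ∀ (i : Fin (m+1)) (y : Fin (m+1) → ℝ) (a b : ℝ), a ≤ b →
      Wc (Function.update y i a) ≤ Wc (Function.update y i b))
    (hlip : ∀ (i : Fin (m+1)) (y : Fin (m+1) → ℝ) (a b : ℝ),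
      |Wc (Function.update y i a) - Wc (Function.update y i b)| ≤ |a - b|)
    (σ τ : Fin (m+1) → Measure ℝ)
    (hσp : ∀ i, IsProbabilityMeasure (σ i)) (hτp : ∀ i, IsProbabilityMeasure (τ i))
    (i₀ : Fin (m+1)) (hagree : ∀ j, j ≠ i₀ → σ j = τ j)
    (hsupσ : σ i₀ (Set.Icc 0 1) = 1) (hsupτ : τ i₀ (Set.Icc 0 1) = 1)
    (ε : ℝ) (hK : ∀ z : ℝ, |(σ i₀ (Set.Ici z)).toReal - (τ i₀ (Set.Ici z)).toReal| ≤ ε) :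
    |(∫ y, Wc y ∂Measure.pi σ) - ∫ y, Wc y ∂Measure.pi τ| ≤ ε := by
  haveI := hσp; haveI := hτp
  have hrest_eq : (fun j => τ (i₀.succAbove j)) = (fun j => σ (i₀.succAbove j)) := by
    funext j; exact (hagree _ (Fin.succAbove_ne i₀ j)).symm
  have hins_meas : Measurable (fun p : ℝ × (Fin m → ℝ) => Wc (i₀.insertNth p.1 p.2)) := by
    apply hWm.comp
    apply measurable_pi_iff.2
    intro j
    rcases eq_or_ne j i₀ with rfl | hj
    · simpa using measurable_fst
    · obtain ⟨l, rfl⟩ := Fin.exists_succAbove_eq hj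
      simpa using (by fun_prop : Measurable fun p : ℝ × (Fin m → ℝ) => p.2 l)
  have hdec : ∀ (ρ : Fin (m+1) → Measure ℝ), (∀ i, IsProbabilityMeasure (ρ i)) →
      (∫ y, Wc y ∂Measure.pi ρ)
        = ∫ y, (∫ x, Wc (i₀.insertNth x y) ∂(ρ i₀))
            ∂(Measure.pi fun j => ρ (i₀.succAbove j)) := by
    intro ρ hρ
    haveI := hρ
    have MP := measurePreserving_piFinSuccAbove ρ i₀
    set e := MeasurableEquiv.piFinSuccAbove (fun _ : Fin (m+1) => ℝ) i₀ with he
    have hint : Integrable (fun p : ℝ × (Fin m → ℝ) => Wc (i₀.insertNth p.1 p.2))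
        ((ρ i₀).prod (Measure.pi fun j => ρ (i₀.succAbove j))) :=
      Integrable.mono' (integrable_const C) hins_meas.aestronglyMeasurable
        (Filter.Eventually.of_forall fun p => by rw [Real.norm_eq_abs]; exact hWb _)
    have h1 : (∫ y, Wc y ∂Measure.pi ρ)
        = ∫ p, Wc (i₀.insertNth p.1 p.2)
            ∂((ρ i₀).prod (Measure.pi fun j => ρ (i₀.succAbove j))) := by
      rw [← MP.map_eq, integral_map e.measurable.aemeasurable]
      · congr 1
        funext x
        rw [show (e x : ℝ × (Fin m → ℝ)).1 = x i₀ from rfl]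
        congr 1
        exact (Fin.insertNth_self_removeNth i₀ x).symm ▸ rfl
      · exact (hins_meas.comp_aemeasurable aemeasurable_id).aestronglyMeasurable
    rw [h1, integral_prod _ hint]
    exact integral_integral_swap hint
  rw [hdec σ hσp, hdec τ hτp, hrest_eq]
  have hdiff : ∀ y : Fin m → ℝ,
      |(∫ x, Wc (i₀.insertNth x y) ∂(σ i₀)) - ∫ x, Wc (i₀.insertNth x y) ∂(τ i₀)| ≤ ε := by
    intro y
    refine oneD _ _ hsupσ hsupτ ε hK _ ?_ ?_
    · intro a b hab
      show Wc (i₀.insertNth a y) ≤ Wc (i₀.insertNth b y)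
      rw [insertNth_eq_update, insertNth_eq_update i₀ b]
      exact hmono i₀ _ a b hab
    · intro a b
      show |Wc (i₀.insertNth a y) - Wc (i₀.insertNth b y)| ≤ |a - b|
      rw [insertNth_eq_update, insertNth_eq_update i₀ b]
      exact hlip i₀ _ a b
  have hinner : ∀ (κ : Measure ℝ), IsProbabilityMeasure κ →
      Integrable (fun y => ∫ x, Wc (i₀.insertNth x y) ∂κ)
        (Measure.pi fun j => σ (i₀.succAbove j)) := by
    intro κ hκ
    haveI := hκ
    refine Integrable.mono' (integrable_const C)
      ((show StronglyMeasurable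
          (Function.uncurry fun (x : ℝ) (y : Fin m → ℝ) => Wc (i₀.insertNth x y)) from
        hins_meas.stronglyMeasurable).integral_prod_left).aestronglyMeasurable
      (Filter.Eventually.of_forall fun y => ?_)
    calc ‖∫ x, Wc (i₀.insertNth x y) ∂κ‖
        ≤ C * (κ Set.univ).toReal := norm_integral_le_of_norm_le_const
          (Filter.Eventually.of_forall fun x => by rw [Real.norm_eq_abs]; exact hWb _)
      _ = C := by simp
  rw [← integral_sub (hinner _ (hσp i₀)) (hinner _ (hτp i₀)), ← Real.norm_eq_abs]
  calc ‖∫ y, ((∫ x, Wc (i₀.insertNth x y) ∂(σ i₀)) - ∫ x, Wc (i₀.insertNth x y) ∂(τ i₀))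
        ∂(Measure.pi fun j => σ (i₀.succAbove j))‖
      ≤ ε * ((Measure.pi fun j => σ (i₀.succAbove j)) Set.univ).toReal :=
        norm_integral_le_of_norm_le_const
          (Filter.Eventually.of_forall fun y => by rw [Real.norm_eq_abs]; exact hdiff y)
    _ = ε := by simp

end Aux

/-- Hybrid argument: if W is non-decreasing and 1-Lipschitz in each coordinate and the
independent coordinate distributions are ε-close in Kolmogorov distance (in both tail
forms), then |E[W(X)] − E[W(X′)]| ≤ nε. -/
theorem stmt_13 {Ω : Type*} [MeasurableSpace Ω] (μ : Measure Ω) [IsProbabilityMeasure μ]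
    (n : ℕ) (W : (Fin n → ℝ) → ℝ)
    (hWmono : ∀ (i : Fin n) (y : Fin n → ℝ) (a b : ℝ), a ≤ b →
      W (Function.update y i a) ≤ W (Function.update y i b))
    (hWlip : ∀ (i : Fin n) (y : Fin n → ℝ) (a b : ℝ),
      |W (Function.update y i a) - W (Function.update y i b)| ≤ |a - b|)
    (X X' : Fin n → Ω → ℝ)
    (hX : ∀ i, Measurable (X i)) (hX' : ∀ i, Measurable (X' i))
    (hXr : ∀ i, ∀ᵐ ω ∂μ, X i ω ∈ Set.Icc (0 : ℝ) 1)
    (hX'r : ∀ i, ∀ᵐ ω ∂μ, X' i ω ∈ Set.Icc (0 : ℝ) 1)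
    (hindX : ProbabilityTheory.iIndepFun X μ)
    (hindX' : ProbabilityTheory.iIndepFun X' μ)
    (ε : ℝ)
    (hKle : ∀ i (z : ℝ),
      |(μ {ω | X i ω ≤ z}).toReal - (μ {ω | X' i ω ≤ z}).toReal| ≤ ε)
    (hKge : ∀ i (z : ℝ),
      |(μ {ω | z ≤ X i ω}).toReal - (μ {ω | z ≤ X' i ω}).toReal| ≤ ε) :
    |(∫ ω, W (fun i => X i ω) ∂μ) - ∫ ω, W (fun i => X' i ω) ∂μ| ≤ n * ε := by
  rcases Nat.eq_zero_or_pos n with hn | hn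
  · subst hn
    have he : (∫ ω, W (fun i => X i ω) ∂μ) = ∫ ω, W (fun i => X' i ω) ∂μ := by
      refine integral_congr_ae (Filter.Eventually.of_forall fun ω => ?_)
      show W (fun i => X i ω) = W (fun i => X' i ω)
      exact congrArg W (funext fun i => i.elim0)
    rw [he, sub_self, abs_zero]
    simp
  obtain ⟨m, rfl⟩ : ∃ m, n = m + 1 := ⟨n - 1, by omega⟩
  have hε : 0 ≤ ε := le_trans (abs_nonneg _) (hKge 0 0)
  -- the clamped W
  set Wc : (Fin (m+1) → ℝ) → ℝ := fun x => W (fun i => cl01 (x i)) with hWc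
  have hupd : ∀ (y : Fin (m+1) → ℝ) (i : Fin (m+1)) (a : ℝ),
      Wc (Function.update y i a)
        = W (Function.update (fun j => cl01 (y j)) i (cl01 a)) := by
    intro y i a
    simp only [hWc]
    congr 1
    funext j
    rcases eq_or_ne j i with rfl | hj
    · simp
    · rw [Function.update_of_ne hj, Function.update_of_ne hj]
  have hWcmono : ∀ (i : Fin (m+1)) (y : Fin (m+1) → ℝ) (a b : ℝ), a ≤ b →
      Wc (Function.update y i a) ≤ Wc (Function.update y i b) := by
    intro i y a b hab
    rw [hupd, hupd]
    exact hWmono i _ _ _ (cl01_mono hab)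
  have hWclip : ∀ (i : Fin (m+1)) (y : Fin (m+1) → ℝ) (a b : ℝ),
      |Wc (Function.update y i a) - Wc (Function.update y i b)| ≤ |a - b| := by
    intro i y a b
    rw [hupd, hupd]
    exact (hWlip i _ _ _).trans (cl01_lip a b)
  have hWcont : Continuous W := by
    have : LipschitzWith (m+1 : ℕ) W := by
      apply LipschitzWith.of_dist_le_mul
      intro u v
      rw [Real.dist_eq]
      refine (W_tele W hWlip u v).trans ?_
      calc (∑ i, |u i - v i|) ≤ ∑ _i : Fin (m+1), dist u v :=
            Finset.sum_le_sum fun i _ => by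
              rw [← Real.dist_eq]; exact dist_le_pi_dist u v i
        _ = ((m+1 : ℕ) : ℝ) * dist u v := by
            rw [Finset.sum_const, Finset.card_univ, Fintype.card_fin, nsmul_eq_mul]
        _ = ((m+1 : ℕ) : NNReal) * dist u v := by norm_cast
    exact this.continuous
  have hWccont : Continuous Wc := by
    apply hWcont.comp
    exact continuous_pi fun i => cl01_cont.comp (continuous_apply i)
  have hWm : Measurable Wc := hWccont.measurable
  set C : ℝ := |W (fun _ => cl01 0)| + (m+1) with hC
  have hWb : ∀ x, |Wc x| ≤ C := by
    intro x
    have h1 : |Wc x - W (fun _ => cl01 0)| ≤ ∑ i : Fin (m+1), |cl01 (x i) - cl01 0| :=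
      W_tele W hWlip _ _
    have h2 : (∑ i : Fin (m+1), |cl01 (x i) - cl01 0|) ≤ ∑ _i : Fin (m+1), (1:ℝ) := by
      refine Finset.sum_le_sum fun i _ => ?_
      have ha := cl01_mem (x i); have hb := cl01_mem 0
      rw [abs_sub_le_iff]
      constructor <;> linarith [ha.1, ha.2, hb.1, hb.2]
    have h3 : (∑ _i : Fin (m+1), (1:ℝ)) = (m+1 : ℝ) := by simp
    calc |Wc x| ≤ |Wc x - W (fun _ => cl01 0)| + |W (fun _ => cl01 0)| := by
          have := abs_sub_abs_le_abs_sub (Wc x) (W (fun _ => cl01 0))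
          have := abs_add_le (Wc x - W (fun _ => cl01 0)) (W (fun _ => cl01 0))
          calc |Wc x| = |(Wc x - W (fun _ => cl01 0)) + W (fun _ => cl01 0)| := by ring_nf
            _ ≤ _ := abs_add_le _ _
      _ ≤ (m+1 : ℝ) + |W (fun _ => cl01 0)| := by
          have := h1.trans (h2.trans_eq h3); linarith
      _ = C := by rw [hC]; push_cast; ring
  -- marginal laws
  set ν : Fin (m+1) → Measure ℝ := fun i => μ.map (X i) with hν
  set ν' : Fin (m+1) → Measure ℝ := fun i => μ.map (X' i) with hν'
  haveI hνp : ∀ i, IsProbabilityMeasure (ν i) :=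
    fun i => Measure.isProbabilityMeasure_map (hX i).aemeasurable
  haveI hν'p : ∀ i, IsProbabilityMeasure (ν' i) :=
    fun i => Measure.isProbabilityMeasure_map (hX' i).aemeasurable
  have hfull : ∀ (Y : Ω → ℝ), Measurable Y → (∀ᵐ ω ∂μ, Y ω ∈ Set.Icc (0:ℝ) 1) →
      μ.map Y (Set.Icc 0 1) = 1 := by
    intro Y hYm hYr
    rw [Measure.map_apply hYm measurableSet_Icc]
    rw [← prob_compl_eq_zero_iff (hYm measurableSet_Icc)]
    rw [ae_iff] at hYr
    exact hYr
  have hsupν : ∀ i, ν i (Set.Icc 0 1) = 1 := fun i => hfull _ (hX i) (hXr i)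
  have hsupν' : ∀ i, ν' i (Set.Icc 0 1) = 1 := fun i => hfull _ (hX' i) (hX'r i)
  have hKIci : ∀ i (z : ℝ), |(ν i (Set.Ici z)).toReal - (ν' i (Set.Ici z)).toReal| ≤ ε := by
    intro i z
    rw [hν, hν', Measure.map_apply (hX i) measurableSet_Ici,
      Measure.map_apply (hX' i) measurableSet_Ici]
    exact hKge i z
  -- joint law is the product measure
  have hmap : ∀ (Y : Fin (m+1) → Ω → ℝ), (∀ i, Measurable (Y i)) →
      ProbabilityTheory.iIndepFun Y μ →
      μ.map (fun ω i => Y i ω) = Measure.pi (fun i => μ.map (Y i)) := by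
    intro Y hYm hYind
    haveI : ∀ i, IsProbabilityMeasure (μ.map (Y i)) :=
      fun i => Measure.isProbabilityMeasure_map (hYm i).aemeasurable
    refine (Measure.pi_eq fun s hs => ?_).symm
    have hΦ : Measurable (fun ω i => Y i ω) := measurable_pi_lambda _ hYm
    rw [Measure.map_apply hΦ (MeasurableSet.univ_pi hs)]
    have hpre : (fun ω i => Y i ω) ⁻¹' (Set.univ.pi s) = ⋂ i, Y i ⁻¹' s i := by
      ext ω; simp [Set.mem_pi]
    rw [hpre, hYind.meas_iInter fun i => ⟨s i, hs i, rfl⟩]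
    exact Finset.prod_congr rfl fun i _ =>
      (Measure.map_apply (hYm i) (hs i)).symm
  -- replace W by Wc in the integrals
  have hWtoWc : ∀ (Y : Fin (m+1) → Ω → ℝ), (∀ i, ∀ᵐ ω ∂μ, Y i ω ∈ Set.Icc (0:ℝ) 1) →
      (∫ ω, W (fun i => Y i ω) ∂μ) = ∫ ω, Wc (fun i => Y i ω) ∂μ := by
    intro Y hYr
    refine integral_congr_ae ?_
    have hall : ∀ᵐ ω ∂μ, ∀ i, Y i ω ∈ Set.Icc (0:ℝ) 1 := (ae_all_iff).2 hYr
    filter_upwards [hall] with ω hω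
    simp only [hWc]
    congr 1
    exact funext fun i => (cl01_of_mem (hω i)).symm
  have hlaw : ∀ (Y : Fin (m+1) → Ω → ℝ), (∀ i, Measurable (Y i)) →
      ProbabilityTheory.iIndepFun Y μ →
      (∫ ω, Wc (fun i => Y i ω) ∂μ) = ∫ y, Wc y ∂Measure.pi (fun i => μ.map (Y i)) := by
    intro Y hYm hYind
    rw [← hmap Y hYm hYind]
    rw [integral_map (measurable_pi_lambda _ hYm).aemeasurable hWm.aestronglyMeasurable]
  -- the hybrid sequence
  set mm : ℕ → Fin (m+1) → Measure ℝ :=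
    fun k i => if (i:ℕ) < k then ν' i else ν i with hmm
  haveI hmmp : ∀ k i, IsProbabilityMeasure (mm k i) := by
    intro k i
    simp only [hmm]
    split_ifs
    · exact hν'p i
    · exact hνp i
  set A : ℕ → ℝ := fun k => ∫ y, Wc y ∂Measure.pi (mm k) with hA
  have hmm0 : mm 0 = ν := funext fun i => by simp [hmm]
  have hmmn : mm (m+1) = ν' := funext fun i => by simp [hmm, i.isLt]
  have hA0 : A 0 = ∫ y, Wc y ∂Measure.pi ν := by
    show (∫ y, Wc y ∂Measure.pi (mm 0)) = _
    rw [hmm0]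
  have hAn : A (m+1) = ∫ y, Wc y ∂Measure.pi ν' := by
    show (∫ y, Wc y ∂Measure.pi (mm (m+1))) = _
    rw [hmmn]
  have hstep : ∀ k, k < m + 1 → |A k - A (k+1)| ≤ ε := by
    intro k hk
    set i₀ : Fin (m+1) := ⟨k, hk⟩ with hi₀
    have hσi : mm k i₀ = ν i₀ := by simp [hmm, hi₀]
    have hτi : mm (k+1) i₀ = ν' i₀ := by simp [hmm, hi₀]
    refine step Wc C hWb hWm hWcmono hWclip (mm k) (mm (k+1)) (hmmp k) (hmmp (k+1)) i₀
      ?_ ?_ ?_ ε ?_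
    · intro j hj
      have hjk : (j : ℕ) ≠ k := fun hc => hj (Fin.ext hc)
      simp only [hmm]
      by_cases h2 : (j:ℕ) < k
      · rw [if_pos h2, if_pos (by omega : (j:ℕ) < k + 1)]
      · rw [if_neg h2, if_neg (by omega : ¬ (j:ℕ) < k + 1)]
    · rw [hσi]; exact hsupν i₀
    · rw [hτi]; exact hsupν' i₀
    · intro z; rw [hσi, hτi]; exact hKIci i₀ z
  have htel := abs_telescope A (fun _ => ε) (m+1) hstep
  rw [hA0, hAn] at htel
  rw [hWtoWc X hXr, hWtoWc X' hX'r, hlaw X hX hindX, hlaw X' hX' hindX']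
  refine htel.trans (le_of_eq ?_)
  rw [Finset.sum_const, Finset.card_range, nsmul_eq_mul]
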